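/- Let k ≥ 1 and let σ_0, σ_1, ..., σ_l be random variables where σ_1, ..., σ_{l-1} are i.i.d. uniform on {1,...,k}, independent of σ_0 and σ_l. Define ω(x,y) = k-1 if x = y and ω(x,y) = -1 otherwise. Then for any real numbers a, b, the conditional expectation E[∏_{i=1}^{l} (a + b·ω(σ_{i-1}, σ_i)) | σ_0, σ_l] equals a^l + b^l · ω(σ_0, σ_l). -/

import Mathlib

open Finset
open Fin.NatCast

/-- `ω(x,y) = k-1` if `x = y` and `-1` otherwise. -/
def omega (k : ℕ) (x y : Fin k) : ℝ := if x = y then (k : ℝ) - 1 else -1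

lemma omega_comm (k : ℕ) (x y : Fin k) : omega k x y = omega k y x := by
  simp [omega, eq_comm]

lemma omega_rep (k : ℕ) (x y : Fin k) :
    omega k x y = (k : ℝ) * (if x = y then 1 else 0) - 1 := by
  simp only [omega]; split <;> ring

lemma sum_omega (k : ℕ) (x : Fin k) : ∑ z, omega k x z = 0 := by
  simp_rw [omega_rep]
  rw [Finset.sum_sub_distrib, ← Finset.mul_sum, Finset.sum_ite_eq,
    Finset.sum_const, Finset.card_univ, Fintype.card_fin]
  simp

lemma sum_omega_mul (k : ℕ) (x y : Fin k) :
    ∑ z, omega k x z * omega k z y = (k : ℝ) * omega k x y := by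
  simp_rw [omega_rep]
  have h1 : ∀ z : Fin k, ((k : ℝ) * (if x = z then 1 else 0) - 1) *
      ((k : ℝ) * (if z = y then 1 else 0) - 1)
      = (k:ℝ)^2 * ((if x = z then 1 else 0) * (if z = y then 1 else 0))
        - (k:ℝ) * (if x = z then 1 else 0) - (k:ℝ) * (if z = y then 1 else 0) + 1 := by
    intro z; ring
  simp_rw [h1]
  have h2 : ∀ z : Fin k, (if x = z then (1:ℝ) else 0) * (if z = y then 1 else 0)
      = if x = z then (if z = y then (1:ℝ) else 0) else 0 := by
    intro z; split <;> simp
  simp_rw [h2]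
  rw [Finset.sum_add_distrib, Finset.sum_sub_distrib, Finset.sum_sub_distrib,
    ← Finset.mul_sum, ← Finset.mul_sum, ← Finset.mul_sum,
    Finset.sum_ite_eq, Finset.sum_ite_eq, Finset.sum_ite_eq',
    Finset.sum_const, Finset.card_univ, Fintype.card_fin]
  simp only [Finset.mem_univ, if_true]
  by_cases h : x = y <;> simp [h] <;> ring

lemma path_sum_eq_pow (k : ℕ) (M : Matrix (Fin k) (Fin k) ℝ) :
    ∀ (l : ℕ) (x y : Fin k),
    ∑ σ ∈ Finset.univ.filter
        (fun σ : Fin (l + 1) → Fin k => σ 0 = x ∧ σ (Fin.last l) = y),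
      ∏ i ∈ Finset.range l, M (σ ↑i) (σ ↑(i + 1)) = (M ^ l) x y := by
  intro l
  induction l with
  | zero =>
    intro x y
    have hfil : (Finset.univ.filter
        (fun σ : Fin 1 → Fin k => σ 0 = x ∧ σ (Fin.last 0) = y))
        = if x = y then {fun _ => x} else ∅ := by
      split_ifs with h
      · subst h
        ext σ
        simp [funext_iff, Fin.forall_fin_one, Fin.last]
      · ext σ
        simp [Fin.last]
        intro h1 h2
        exact absurd (h1 ▸ h2) h
    rw [hfil]
    split_ifs with h
    · simp [h, Matrix.one_apply_eq]
    · simp [Matrix.one_apply_ne h]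
  | succ l ih =>
    intro x y
    have hcast : ∀ i : ℕ, i ≤ l → ((i : Fin (l + 2)))
        = Fin.castSucc ((i : Fin (l + 1))) := by
      intro i hi
      ext
      simp only [Fin.val_natCast, Fin.coe_castSucc]
      rw [Nat.mod_eq_of_lt (by omega), Nat.mod_eq_of_lt (by omega)]
    have h0cast : (0 : Fin (l + 2)) = Fin.castSucc (0 : Fin (l + 1)) := by
      ext; simp
    rw [pow_succ, Matrix.mul_apply,
      ← Finset.sum_fiberwise _ (fun σ : Fin (l + 2) → Fin k =>
        σ (Fin.castSucc (Fin.last l)))]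
    refine Finset.sum_congr rfl fun z _ => ?_
    rw [← ih x z, Finset.sum_mul]
    refine Finset.sum_bij' (fun σ _ => Fin.init σ) (fun σ' _ => Fin.snoc σ' y)
      ?_ ?_ ?_ ?_ ?_
    · intro σ hσ
      simp only [Finset.mem_filter, Finset.mem_univ, true_and] at hσ ⊢
      obtain ⟨⟨h0, hlast⟩, hz⟩ := hσ
      refine ⟨?_, hz⟩
      show σ (Fin.castSucc 0) = x
      rw [← h0cast]; exact h0
    · intro σ' hσ'
      simp only [Finset.mem_filter, Finset.mem_univ, true_and] at hσ' ⊢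
      obtain ⟨h0, hlast⟩ := hσ'
      refine ⟨⟨?_, ?_⟩, ?_⟩
      · rw [h0cast, Fin.snoc_castSucc]; exact h0
      · exact Fin.snoc_last _ _
      · rw [Fin.snoc_castSucc]; exact hlast
    · intro σ hσ
      simp only [Finset.mem_filter, Finset.mem_univ, true_and] at hσ
      have := Fin.snoc_init_self σ
      rw [hσ.1.2] at this
      exact this
    · intro σ' _
      exact Fin.init_snoc _ _
    · intro σ hσ
      simp only [Finset.mem_filter, Finset.mem_univ, true_and] at hσ
      obtain ⟨⟨h0, hlast⟩, hz⟩ := hσ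
      rw [Finset.prod_range_succ]
      congr 1
      · refine Finset.prod_congr rfl fun i hi => ?_
        rw [Finset.mem_range] at hi
        rw [hcast i (by omega), hcast (i+1) (by omega)]
        simp [Fin.init]
      · have h1 : ((l : Fin (l + 2))) = Fin.castSucc (Fin.last l) := by
          ext
          simp only [Fin.val_natCast, Fin.coe_castSucc, Fin.val_last]
          rw [Nat.mod_eq_of_lt (by omega)]
        have h2 : (((l + 1 : ℕ) : Fin (l + 2))) = Fin.last (l + 1) := by
          ext
          simp only [Fin.val_natCast, Fin.val_last]
          rw [Nat.mod_eq_of_lt (by omega)]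
        rw [h1, h2, hz, hlast]

lemma pow_entry (k : ℕ) (a b : ℝ) :
    ∀ l : ℕ, 1 ≤ l → ∀ x y : Fin k,
    ((Matrix.of fun x y : Fin k => a + b * omega k x y) ^ l) x y
      = (k : ℝ) ^ (l - 1) * (a ^ l + b ^ l * omega k x y) := by
  intro l hl
  induction l, hl using Nat.le_induction with
  | base => intro x y; simp [pow_one]
  | succ l hl ih =>
    intro x y
    rw [pow_succ, Matrix.mul_apply]
    simp only [Matrix.of_apply]
    have key : ∀ z : Fin k,
        ((Matrix.of fun x y : Fin k => a + b * omega k x y) ^ l) x z *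
          (a + b * omega k z y)
        = (k : ℝ) ^ (l - 1) *
          (a ^ (l+1) + (a ^ l * b) * omega k z y + (b ^ l * a) * omega k x z
            + b ^ (l+1) * (omega k x z * omega k z y)) := by
      intro z; rw [ih]; ring
    simp_rw [key]
    rw [← Finset.mul_sum]
    have e1 : ∑ z : Fin k,
        (a ^ (l+1) + (a ^ l * b) * omega k z y + (b ^ l * a) * omega k x z
          + b ^ (l+1) * (omega k x z * omega k z y))
        = (k : ℝ) * a ^ (l+1) + (a ^ l * b) * (∑ z, omega k y z)
          + (b ^ l * a) * (∑ z, omega k x z)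
          + b ^ (l+1) * ((k : ℝ) * omega k x y) := by
      rw [Finset.sum_add_distrib, Finset.sum_add_distrib, Finset.sum_add_distrib,
        ← Finset.mul_sum, ← Finset.mul_sum, ← Finset.mul_sum,
        Finset.sum_const, Finset.card_univ, Fintype.card_fin, sum_omega_mul]
      congr 2
      · congr 1
        · simp [nsmul_eq_mul]
        · congr 1
          exact Finset.sum_congr rfl fun z _ => omega_comm k z y
    rw [e1, sum_omega, sum_omega]
    have hk1 : l - 1 + 1 = l := by omega
    have : (k:ℝ)^(l-1) * ((k:ℝ) * a^(l+1) + (a^l*b)*0 + (b^l*a)*0 + b^(l+1) * ((k:ℝ) * omega k x y))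
        = ((k:ℝ)^(l-1) * (k:ℝ)) * (a^(l+1) + b^(l+1) * omega k x y) := by ring
    rw [this, ← pow_succ, hk1]
    norm_num

/-- Conditional expectation of `∏_{i=1}^l (a + b ω(σ_{i-1}, σ_i))` given the endpoints
`σ_0 = x`, `σ_l = y`, where the interior coordinates are i.i.d. uniform on `[k]`,
equals `a^l + b^l ω(x,y)`. -/
theorem path_conditional_expectation (k l : ℕ) (hk : 1 ≤ k) (hl : 1 ≤ l)
    (a b : ℝ) (x y : Fin k) :
    (1 / (k : ℝ) ^ (l - 1)) *
      ∑ σ ∈ Finset.univ.filter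
          (fun σ : Fin (l + 1) → Fin k => σ 0 = x ∧ σ (Fin.last l) = y),
        ∏ i ∈ Finset.range l, (a + b * omega k (σ ↑i) (σ ↑(i + 1)))
      = a ^ l + b ^ l * omega k x y := by
  have h := path_sum_eq_pow k (Matrix.of fun x y : Fin k => a + b * omega k x y) l x y
  simp only [Matrix.of_apply] at h
  rw [h, pow_entry k a b l hl x y]
  have hkpos : ((k : ℝ) ^ (l - 1)) ≠ 0 := by positivity
  field_simp
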